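/- arXiv:1309.0158 — 2 statements merged into one kernel-verified Lean document; each statement's English description precedes it below -/
import Mathlib

section
/- For a positive integer m, let 𝒱 := {−m, …, −1, 0, 1, …, m} and let P be the stochastic matrix with P_{uv} = 1/m if u ≠ v and u·v ≥ 0 with u ≠ 0, P_{uv} = 0 if u·v < 0 or u = v ≠ 0 (and P_{uu} = 0 for all u), and P_{0v} = 1/(2m) for all v ≠ 0. For 0 < α < 1/2, let P̃ coincide with P outside row 0, with P̃_{00} = 0 and P̃_{0v} = (1/2 + α·sgn(v))/m for v ≠ 0. Then: (i) the unique invariant probability vector of P is π_0 = 1/(m+1), π_v = 1/(2m+2) for v ≠ 0; (ii) the unique invariant probability vector π̃ of P̃ satisfies π̃_v − π_v = α·sgn(v)/(m+1) for all v ∈ 𝒱; and (iii) ‖π̃ − π‖ = m·α/(m+1). -/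
open scoped Classical BigOperators
open Finset

variable {V : Type*}

/-- A (row-)stochastic matrix: nonnegative entries, rows summing to one. -/
def IsStochastic [Fintype V] (P : Matrix V V ℝ) : Prop :=
  (∀ u v, 0 ≤ P u v) ∧ ∀ u, ∑ v, P u v = 1

/-- Irreducibility: the digraph with an edge `(u,v)` whenever `P u v > 0`
is strongly connected. -/
def IrreducibleMatrix [Fintype V] (P : Matrix V V ℝ) : Prop :=
  ∀ u v : V, Relation.ReflTransGen (fun a b => 0 < P a b) u v

/-- `p` is an invariant probability (row) vector of `P`. -/
def InvariantProb [Fintype V] (P : Matrix V V ℝ) (p : V → ℝ) : Prop :=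
  (∀ v, 0 ≤ p v) ∧ (∑ v, p v = 1) ∧ ∀ v, ∑ u, p u * P u v = p v

/-- Total variation distance. -/
noncomputable def tvDist [Fintype V] (mu p : V → ℝ) : ℝ :=
  (1 / 2) * ∑ v, |mu v - p v|

/-- The smallest positive solution of `x * log (e^2 / x) = 1`. -/
noncomputable def xstar : ℝ :=
  sInf {x : ℝ | 0 < x ∧ x * Real.log (Real.exp 2 / x) = 1}

/-- The function `Ψ`: `Ψ(x) = x log(e²/x)` for `x ≤ x*`, and `1` for `x > x*`
(note `Ψ(0) = 0` since `Real.log (e²/0) = Real.log 0 = 0`). -/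
noncomputable def Psi (x : ℝ) : ℝ :=
  if x ≤ xstar then x * Real.log (Real.exp 2 / x) else 1

open Fin.NatCast

/-- `phi P W w k` is the probability that a chain with transition matrix `P`
started at `w` exits `W` exactly at time `k`: the sum over `(k+1)`-tuples
`ξ` with `ξ 0 = w`, `ξ l ∈ W` for `0 < l < k`, `ξ k ∉ W`, of `∏ P (ξ (l-1)) (ξ l)`. -/
noncomputable def phi [Fintype V] (P : Matrix V V ℝ) (W : Finset V) (w : V) (k : ℕ) : ℝ :=
  ∑ ξ ∈ Finset.univ.filter (fun ξ : Fin (k + 1) → V =>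
      ξ 0 = w ∧ (∀ l : ℕ, 0 < l → l < k → ξ l ∈ W) ∧ ξ k ∉ W),
    ∏ l ∈ Finset.range k, P (ξ l) (ξ (l + 1))

/-- `(1/t) * min_{w ∈ W, p w > 0} ∑_{k=1}^t phi w k` (the minimum over an empty
index set is taken to be `1`). -/
noncomputable def exitProbAux [Fintype V] (P : Matrix V V ℝ) (p : V → ℝ) (W : Finset V)
    (t : ℕ) : ℝ :=
  if h : (W.filter fun w => 0 < p w).Nonempty then
    (W.filter fun w => 0 < p w).inf' h
      (fun w => (1 / (t : ℝ)) * ∑ k ∈ Finset.Icc 1 t, phi P W w k)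
  else 1

/-- The exit probability from `W`:
`sup_{t ≥ 1} min_{w ∈ W, p w > 0} (1/t) ∑_{k=1}^t phi w k`. -/
noncomputable def exitProb [Fintype V] (P : Matrix V V ℝ) (p : V → ℝ) (W : Finset V) : ℝ :=
  sSup {x : ℝ | ∃ t : ℕ, 1 ≤ t ∧ x = exitProbAux P p W t}

/-- The entrance time `τ*_W := min_{u ∉ W} τ^u`. -/
noncomputable def entranceTime (tau : V → ℝ) (W : Finset V) : ℝ :=
  sInf {x : ℝ | ∃ u, u ∉ W ∧ x = tau u}

namespace Stmt14Aux

noncomputable def qf (m : ℕ) (p : {x : ℤ // x ∈ Finset.Icc (-(m : ℤ)) (m : ℤ)} → ℝ) : ℤ → ℝ :=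
  fun x => if h : x ∈ Finset.Icc (-(m : ℤ)) (m : ℤ) then p ⟨x, h⟩ else 0

lemma qf_spec {m : ℕ} (p : {x : ℤ // x ∈ Finset.Icc (-(m : ℤ)) (m : ℤ)} → ℝ)
    (v : {x : ℤ // x ∈ Finset.Icc (-(m : ℤ)) (m : ℤ)}) : qf m p v.1 = p v := by
  simp [qf, v.2]

lemma sum_transfer {m : ℕ} (p : {x : ℤ // x ∈ Finset.Icc (-(m : ℤ)) (m : ℤ)} → ℝ)
    (g : ℝ → ℤ → ℝ) :
    ∑ v : {x : ℤ // x ∈ Finset.Icc (-(m : ℤ)) (m : ℤ)}, g (p v) v.1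
      = ∑ x ∈ Finset.Icc (-(m : ℤ)) (m : ℤ), g (qf m p x) x := by
  rw [← Finset.sum_coe_sort (Finset.Icc (-(m : ℤ)) (m : ℤ)) (fun x => g (qf m p x) x)]
  exact Finset.sum_congr rfl fun v _ => by rw [qf_spec]

lemma Icc_split {m : ℕ} (hm : 1 ≤ m) (f : ℤ → ℝ) :
    ∑ x ∈ Finset.Icc (-(m : ℤ)) (m : ℤ), f x =
      f 0 + ∑ x ∈ Finset.Icc (1 : ℤ) (m : ℤ), f x
        + ∑ x ∈ Finset.Icc (-(m : ℤ)) (-1 : ℤ), f x := by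
  have hm' : (1 : ℤ) ≤ (m : ℤ) := by exact_mod_cast hm
  have h1 : Finset.Icc (-(m : ℤ)) (m : ℤ)
      = insert 0 (Finset.Icc (1 : ℤ) (m : ℤ) ∪ Finset.Icc (-(m : ℤ)) (-1 : ℤ)) := by
    ext x; simp only [Finset.mem_insert, Finset.mem_union, Finset.mem_Icc]; omega
  have h2 : (0 : ℤ) ∉ Finset.Icc (1 : ℤ) (m : ℤ) ∪ Finset.Icc (-(m : ℤ)) (-1 : ℤ) := by
    simp only [Finset.mem_union, Finset.mem_Icc]; omega
  have h3 : Disjoint (Finset.Icc (1 : ℤ) (m : ℤ)) (Finset.Icc (-(m : ℤ)) (-1 : ℤ)) := by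
    rw [Finset.disjoint_left]; intro a ha hb
    simp only [Finset.mem_Icc] at ha hb; omega
  rw [h1, Finset.sum_insert h2, Finset.sum_union h3]; ring

lemma sum_const_pos {m : ℕ} (c : ℝ) : ∑ _x ∈ Finset.Icc (1 : ℤ) (m : ℤ), c = m * c := by
  rw [Finset.sum_const, nsmul_eq_mul]
  congr 1
  rw [Int.card_Icc]; simp

lemma sum_const_neg {m : ℕ} (c : ℝ) : ∑ _x ∈ Finset.Icc (-(m : ℤ)) (-1 : ℤ), c = m * c := by
  rw [Finset.sum_const, nsmul_eq_mul]
  congr 1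
  rw [Int.card_Icc]; simp

lemma sum_ite_ne {s : Finset ℤ} {w : ℤ} (hw : w ∈ s) (f : ℤ → ℝ) :
    ∑ x ∈ s, (if x = w then (0:ℝ) else f x) = ∑ x ∈ s, f x - f w := by
  have : ∀ x ∈ s, (if x = w then (0:ℝ) else f x) = f x - (if x = w then f x else 0) := by
    intro x _; split_ifs <;> simp
  rw [Finset.sum_congr rfl this, Finset.sum_sub_distrib, Finset.sum_ite_eq' s w f, if_pos hw]

end Stmt14Aux

namespace Stmt14Aux

lemma row_sum {m : ℕ} (hm : 1 ≤ m) (β γ : ℝ)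
    (M : Matrix {x : ℤ // x ∈ Finset.Icc (-(m : ℤ)) (m : ℤ)}
      {x : ℤ // x ∈ Finset.Icc (-(m : ℤ)) (m : ℤ)} ℝ)
    (hM : ∀ u v, M u v =
      if u.1 = 0 then (if v.1 = 0 then 0 else (if 0 < v.1 then β else γ) / m)
      else if u.1 ≠ v.1 ∧ 0 ≤ u.1 * v.1 then 1 / m else 0)
    (p : {x : ℤ // x ∈ Finset.Icc (-(m : ℤ)) (m : ℤ)} → ℝ)
    (v : {x : ℤ // x ∈ Finset.Icc (-(m : ℤ)) (m : ℤ)}) :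
    ∑ u, p u * M u v =
      if v.1 = 0 then
        ((∑ x ∈ Finset.Icc (1 : ℤ) (m : ℤ), qf m p x)
          + ∑ x ∈ Finset.Icc (-(m : ℤ)) (-1 : ℤ), qf m p x) * (1 / m)
      else if 0 < v.1 then
        qf m p 0 * (β / m)
          + ((∑ x ∈ Finset.Icc (1 : ℤ) (m : ℤ), qf m p x) - qf m p v.1) * (1 / m)
      else
        qf m p 0 * (γ / m)
          + ((∑ x ∈ Finset.Icc (-(m : ℤ)) (-1 : ℤ), qf m p x) - qf m p v.1) * (1 / m) := by
  classical
  have hv := Finset.mem_Icc.mp v.2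
  set F : ℤ → ℝ := fun x => qf m p x *
      (if x = 0 then (if v.1 = 0 then 0 else (if 0 < v.1 then β else γ) / m)
       else if x ≠ v.1 ∧ 0 ≤ x * v.1 then 1 / m else 0) with hF
  have hFx : ∀ x : ℤ, F x = qf m p x *
      (if x = 0 then (if v.1 = 0 then 0 else (if 0 < v.1 then β else γ) / m)
       else if x ≠ v.1 ∧ 0 ≤ x * v.1 then 1 / m else 0) := fun x => rfl
  have step1 : ∑ u, p u * M u v = ∑ x ∈ Finset.Icc (-(m : ℤ)) (m : ℤ), F x := by
    have := sum_transfer p (fun a x => a *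
      (if x = 0 then (if v.1 = 0 then 0 else (if 0 < v.1 then β else γ) / m)
       else if x ≠ v.1 ∧ 0 ≤ x * v.1 then 1 / m else 0))
    calc ∑ u, p u * M u v
        = ∑ u : {x : ℤ // x ∈ Finset.Icc (-(m : ℤ)) (m : ℤ)}, (fun a x => a *
          (if x = 0 then (if v.1 = 0 then 0 else (if 0 < v.1 then β else γ) / m)
           else if x ≠ v.1 ∧ 0 ≤ x * v.1 then 1 / m else 0)) (p u) u.1 :=
          Finset.sum_congr rfl fun u _ => by rw [hM u v]
      _ = ∑ x ∈ Finset.Icc (-(m : ℤ)) (m : ℤ), F x := this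
  rw [step1, Icc_split hm F]
  have hF0 : F 0 = if v.1 = 0 then 0 else qf m p 0 * ((if 0 < v.1 then β else γ) / m) := by
    rw [hFx 0, if_pos rfl]
    by_cases h : v.1 = 0
    · rw [if_pos h, if_pos h, mul_zero]
    · rw [if_neg h, if_neg h]
  rcases lt_trichotomy v.1 0 with hvn | hv0 | hvp
  · -- v negative
    have hmemn : v.1 ∈ Finset.Icc (-(m : ℤ)) (-1 : ℤ) := by
      rw [Finset.mem_Icc]; omega
    have hpos : ∑ x ∈ Finset.Icc (1 : ℤ) (m : ℤ), F x = 0 := by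
      apply Finset.sum_eq_zero
      intro x hx
      rw [Finset.mem_Icc] at hx
      rw [hFx x, if_neg (by omega), if_neg (by rintro ⟨-, h2⟩; nlinarith), mul_zero]
    have hneg : ∑ x ∈ Finset.Icc (-(m : ℤ)) (-1 : ℤ), F x
        = (∑ x ∈ Finset.Icc (-(m : ℤ)) (-1 : ℤ), qf m p x) * (1 / m)
          - qf m p v.1 * (1 / m) := by
      have e1 : ∀ x ∈ Finset.Icc (-(m : ℤ)) (-1 : ℤ),
          F x = if x = v.1 then 0 else qf m p x * (1 / m) := by
        intro x hx
        rw [Finset.mem_Icc] at hx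
        by_cases hxv : x = v.1
        · rw [if_pos hxv, hFx x, if_neg (by omega), if_neg (fun h => h.1 hxv), mul_zero]
        · rw [if_neg hxv, hFx x, if_neg (by omega), if_pos ⟨hxv, by nlinarith⟩]
      rw [Finset.sum_congr rfl e1, sum_ite_ne hmemn (fun x => qf m p x * (1 / m)),
        ← Finset.sum_mul]
    rw [hpos, hneg, if_neg (by omega), if_neg (by omega), hF0, if_neg (by omega),
      if_neg (by omega)]
    ring
  · -- v zero
    have hposc : ∀ x ∈ Finset.Icc (1 : ℤ) (m : ℤ), F x = qf m p x * (1 / m) := by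
      intro x hx
      rw [Finset.mem_Icc] at hx
      rw [hFx x, if_neg (by omega), if_pos ⟨by omega, by rw [hv0, mul_zero]⟩]
    have hnegc : ∀ x ∈ Finset.Icc (-(m : ℤ)) (-1 : ℤ), F x = qf m p x * (1 / m) := by
      intro x hx
      rw [Finset.mem_Icc] at hx
      rw [hFx x, if_neg (by omega), if_pos ⟨by omega, by rw [hv0, mul_zero]⟩]
    rw [Finset.sum_congr rfl hposc, Finset.sum_congr rfl hnegc, ← Finset.sum_mul,
      ← Finset.sum_mul, if_pos hv0, hF0, if_pos hv0]
    ring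
  · -- v positive
    have hmemp : v.1 ∈ Finset.Icc (1 : ℤ) (m : ℤ) := by
      rw [Finset.mem_Icc]; omega
    have hneg : ∑ x ∈ Finset.Icc (-(m : ℤ)) (-1 : ℤ), F x = 0 := by
      apply Finset.sum_eq_zero
      intro x hx
      rw [Finset.mem_Icc] at hx
      rw [hFx x, if_neg (by omega), if_neg (by rintro ⟨-, h2⟩; nlinarith), mul_zero]
    have hpos : ∑ x ∈ Finset.Icc (1 : ℤ) (m : ℤ), F x
        = (∑ x ∈ Finset.Icc (1 : ℤ) (m : ℤ), qf m p x) * (1 / m)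
          - qf m p v.1 * (1 / m) := by
      have e1 : ∀ x ∈ Finset.Icc (1 : ℤ) (m : ℤ),
          F x = if x = v.1 then 0 else qf m p x * (1 / m) := by
        intro x hx
        rw [Finset.mem_Icc] at hx
        by_cases hxv : x = v.1
        · rw [if_pos hxv, hFx x, if_neg (by omega), if_neg (fun h => h.1 hxv), mul_zero]
        · rw [if_neg hxv, hFx x, if_neg (by omega), if_pos ⟨hxv, by nlinarith⟩]
      rw [Finset.sum_congr rfl e1, sum_ite_ne hmemp (fun x => qf m p x * (1 / m)),
        ← Finset.sum_mul]
    rw [hpos, hneg, if_neg (by omega), if_pos hvp, hF0, if_neg (by omega), if_pos hvp]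
    ring

end Stmt14Aux

namespace Stmt14Aux

lemma invariant_val {m : ℕ} (hm : 1 ≤ m) (β γ : ℝ) (hβγ : β + γ = 1)
    (M : Matrix {x : ℤ // x ∈ Finset.Icc (-(m : ℤ)) (m : ℤ)}
      {x : ℤ // x ∈ Finset.Icc (-(m : ℤ)) (m : ℤ)} ℝ)
    (hM : ∀ u v, M u v =
      if u.1 = 0 then (if v.1 = 0 then 0 else (if 0 < v.1 then β else γ) / m)
      else if u.1 ≠ v.1 ∧ 0 ≤ u.1 * v.1 then 1 / m else 0)
    (p : {x : ℤ // x ∈ Finset.Icc (-(m : ℤ)) (m : ℤ)} → ℝ)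
    (hp : InvariantProb M p) :
    ∀ v, p v = (if v.1 = 0 then 1 else if 0 < v.1 then β else γ) / ((m : ℝ) + 1) := by
  classical
  have hm0 : (m : ℝ) ≠ 0 := Nat.cast_ne_zero.mpr (by omega)
  have hm1 : (m : ℝ) + 1 ≠ 0 := by positivity
  set Sp := ∑ x ∈ Finset.Icc (1 : ℤ) (m : ℤ), qf m p x with hSpdef
  set Sn := ∑ x ∈ Finset.Icc (-(m : ℤ)) (-1 : ℤ), qf m p x with hSndef
  have hsum : qf m p 0 + Sp + Sn = 1 := by
    have h1 : ∑ v, p v = ∑ x ∈ Finset.Icc (-(m : ℤ)) (m : ℤ), qf m p x :=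
      sum_transfer p (fun a _ => a)
    have h2 := hp.2.1
    rw [h1, Icc_split hm] at h2
    linarith
  have hinv := hp.2.2
  have keyp : ∀ w : ℤ, 1 ≤ w → w ≤ (m : ℤ) →
      qf m p w * ((m : ℝ) + 1) = qf m p 0 * β + Sp := by
    intro w hw1 hw2
    have hwmem : w ∈ Finset.Icc (-(m : ℤ)) (m : ℤ) := by rw [Finset.mem_Icc]; omega
    have hpw : qf m p w = p ⟨w, hwmem⟩ := qf_spec p ⟨w, hwmem⟩
    have h : (if w = 0 then (Sp + Sn) * (1 / (m : ℝ))
        else if 0 < w then qf m p 0 * (β / m) + (Sp - qf m p w) * (1 / m)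
        else qf m p 0 * (γ / m) + (Sn - qf m p w) * (1 / m)) = p ⟨w, hwmem⟩ := by
      have h0 := hinv ⟨w, hwmem⟩
      rw [row_sum hm β γ M hM p ⟨w, hwmem⟩] at h0
      exact h0
    rw [if_neg (by omega), if_pos (by omega), ← hpw] at h
    field_simp at h
    linarith
  have keyn : ∀ w : ℤ, -(m : ℤ) ≤ w → w ≤ -1 →
      qf m p w * ((m : ℝ) + 1) = qf m p 0 * γ + Sn := by
    intro w hw1 hw2
    have hwmem : w ∈ Finset.Icc (-(m : ℤ)) (m : ℤ) := by rw [Finset.mem_Icc]; omega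
    have hpw : qf m p w = p ⟨w, hwmem⟩ := qf_spec p ⟨w, hwmem⟩
    have h : (if w = 0 then (Sp + Sn) * (1 / (m : ℝ))
        else if 0 < w then qf m p 0 * (β / m) + (Sp - qf m p w) * (1 / m)
        else qf m p 0 * (γ / m) + (Sn - qf m p w) * (1 / m)) = p ⟨w, hwmem⟩ := by
      have h0 := hinv ⟨w, hwmem⟩
      rw [row_sum hm β γ M hM p ⟨w, hwmem⟩] at h0
      exact h0
    rw [if_neg (by omega), if_neg (by omega), ← hpw] at h
    field_simp at h
    linarith
  have hSp : Sp = (m : ℝ) * (β * qf m p 0) := by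
    have hc : Sp * ((m : ℝ) + 1) = (m : ℝ) * (qf m p 0 * β + Sp) := by
      calc Sp * ((m : ℝ) + 1) = ∑ x ∈ Finset.Icc (1 : ℤ) (m : ℤ), qf m p x * ((m : ℝ) + 1) :=
            by rw [Finset.sum_mul]
        _ = ∑ _x ∈ Finset.Icc (1 : ℤ) (m : ℤ), (qf m p 0 * β + Sp) :=
            Finset.sum_congr rfl fun x hx => by
              rw [Finset.mem_Icc] at hx; exact keyp x hx.1 hx.2
        _ = (m : ℝ) * (qf m p 0 * β + Sp) := sum_const_pos _
    linear_combination hc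
  have hSn : Sn = (m : ℝ) * (γ * qf m p 0) := by
    have hc : Sn * ((m : ℝ) + 1) = (m : ℝ) * (qf m p 0 * γ + Sn) := by
      calc Sn * ((m : ℝ) + 1)
          = ∑ x ∈ Finset.Icc (-(m : ℤ)) (-1 : ℤ), qf m p x * ((m : ℝ) + 1) :=
            by rw [Finset.sum_mul]
        _ = ∑ _x ∈ Finset.Icc (-(m : ℤ)) (-1 : ℤ), (qf m p 0 * γ + Sn) :=
            Finset.sum_congr rfl fun x hx => by
              rw [Finset.mem_Icc] at hx; exact keyn x hx.1 hx.2
        _ = (m : ℝ) * (qf m p 0 * γ + Sn) := sum_const_neg _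
    linear_combination hc
  have hq0 : qf m p 0 * ((m : ℝ) + 1) = 1 := by
    linear_combination hsum - hSp - hSn - (m : ℝ) * qf m p 0 * hβγ
  intro v
  have hv := Finset.mem_Icc.mp v.2
  have hpv : qf m p v.1 = p v := qf_spec p v
  rcases lt_trichotomy v.1 0 with hvn | hv0 | hvp
  · rw [if_neg (by omega), if_neg (by omega), ← hpv, eq_div_iff hm1]
    have k := keyn v.1 hv.1 (by omega)
    linear_combination k + hSn + γ * hq0
  · rw [if_pos hv0, ← hpv, hv0, eq_div_iff hm1]
    exact hq0
  · rw [if_neg (by omega), if_pos hvp, ← hpv, eq_div_iff hm1]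
    have k := keyp v.1 (by omega) hv.2
    linear_combination k + hSp + β * hq0

lemma invariant_pi {m : ℕ} (hm : 1 ≤ m) (β γ : ℝ) (hβ : 0 ≤ β) (hγ : 0 ≤ γ)
    (hβγ : β + γ = 1)
    (M : Matrix {x : ℤ // x ∈ Finset.Icc (-(m : ℤ)) (m : ℤ)}
      {x : ℤ // x ∈ Finset.Icc (-(m : ℤ)) (m : ℤ)} ℝ)
    (hM : ∀ u v, M u v =
      if u.1 = 0 then (if v.1 = 0 then 0 else (if 0 < v.1 then β else γ) / m)
      else if u.1 ≠ v.1 ∧ 0 ≤ u.1 * v.1 then 1 / m else 0) :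
    InvariantProb M
      (fun v => (if v.1 = 0 then 1 else if 0 < v.1 then β else γ) / ((m : ℝ) + 1)) := by
  classical
  have hm0 : (m : ℝ) ≠ 0 := Nat.cast_ne_zero.mpr (by omega)
  have hm1 : (m : ℝ) + 1 ≠ 0 := by positivity
  set p : {x : ℤ // x ∈ Finset.Icc (-(m : ℤ)) (m : ℤ)} → ℝ :=
    fun v => (if v.1 = 0 then 1 else if 0 < v.1 then β else γ) / ((m : ℝ) + 1) with hpdef
  have hqf : ∀ x ∈ Finset.Icc (-(m : ℤ)) (m : ℤ),
      qf m p x = (if x = 0 then 1 else if 0 < x then β else γ) / ((m : ℝ) + 1) := by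
    intro x hx
    simp only [qf, dif_pos hx, hpdef]
  have hq0 : qf m p 0 = 1 / ((m : ℝ) + 1) := by
    rw [hqf 0 (by rw [Finset.mem_Icc]; omega), if_pos rfl]
  have hSp : ∑ x ∈ Finset.Icc (1 : ℤ) (m : ℤ), qf m p x = (m : ℝ) * (β / ((m : ℝ) + 1)) := by
    have e : ∀ x ∈ Finset.Icc (1 : ℤ) (m : ℤ), qf m p x = β / ((m : ℝ) + 1) := by
      intro x hx
      rw [Finset.mem_Icc] at hx
      rw [hqf x (by rw [Finset.mem_Icc]; omega), if_neg (by omega), if_pos (by omega)]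
    rw [Finset.sum_congr rfl e]
    exact sum_const_pos _
  have hSn : ∑ x ∈ Finset.Icc (-(m : ℤ)) (-1 : ℤ), qf m p x
      = (m : ℝ) * (γ / ((m : ℝ) + 1)) := by
    have e : ∀ x ∈ Finset.Icc (-(m : ℤ)) (-1 : ℤ), qf m p x = γ / ((m : ℝ) + 1) := by
      intro x hx
      rw [Finset.mem_Icc] at hx
      rw [hqf x (by rw [Finset.mem_Icc]; omega), if_neg (by omega), if_neg (by omega)]
    rw [Finset.sum_congr rfl e]
    exact sum_const_neg _
  refine ⟨?_, ?_, ?_⟩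
  · intro v
    have : p v = (if v.1 = 0 then 1 else if 0 < v.1 then β else γ) / ((m : ℝ) + 1) := rfl
    rw [this]
    apply div_nonneg _ (by positivity)
    split_ifs <;> [exact zero_le_one; exact hβ; exact hγ]
  · have h1 : ∑ v, p v = ∑ x ∈ Finset.Icc (-(m : ℤ)) (m : ℤ), qf m p x :=
      sum_transfer p (fun a _ => a)
    rw [h1, Icc_split hm, hq0, hSp, hSn]
    field_simp
    linear_combination (m : ℝ) * hβγ
  · intro v
    have hv := Finset.mem_Icc.mp v.2
    have hpv : p v = (if v.1 = 0 then 1 else if 0 < v.1 then β else γ) / ((m : ℝ) + 1) := rfl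
    have hpvq : qf m p v.1 = (if v.1 = 0 then 1 else if 0 < v.1 then β else γ)
        / ((m : ℝ) + 1) := hqf v.1 v.2
    rw [row_sum hm β γ M hM p v, hq0, hSp, hSn, hpv, hpvq]
    split_ifs with h1 h2
    · field_simp
      linear_combination hβγ
    · field_simp
      ring
    · field_simp
      ring

end Stmt14Aux


/-- the glued-complete-graphs example on `{-m, …, m}`: the unique
invariant probability vector of `P` is `π_0 = 1/(m+1)`, `π_v = 1/(2m+2)` for
`v ≠ 0`; any invariant probability vector `π̃` of `P̃` satisfies
`π̃_v - π_v = α sgn(v)/(m+1)` and `‖π̃ - π‖ = m α/(m+1)`. -/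
theorem stmt14 (m : ℕ) (hm : 1 ≤ m)
    (P Pt : Matrix {x : ℤ // x ∈ Finset.Icc (-(m : ℤ)) (m : ℤ)}
      {x : ℤ // x ∈ Finset.Icc (-(m : ℤ)) (m : ℤ)} ℝ)
    (α : ℝ) (hα : 0 < α ∧ α < 1 / 2)
    (hP : ∀ u v, P u v =
      if u.val = 0 then (if v.val = 0 then 0 else 1 / (2 * (m : ℝ)))
      else if u.val ≠ v.val ∧ 0 ≤ u.val * v.val then 1 / (m : ℝ) else 0)
    (hPt : ∀ u v, Pt u v =
      if u.val = 0 then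
        (if v.val = 0 then 0 else (1 / 2 + α * (v.val.sign : ℝ)) / (m : ℝ))
      else P u v) :
    (InvariantProb P (fun v => if v.val = 0 then 1 / ((m : ℝ) + 1)
        else 1 / (2 * (m : ℝ) + 2)) ∧
      ∀ p, InvariantProb P p →
        p = fun v => if v.val = 0 then 1 / ((m : ℝ) + 1) else 1 / (2 * (m : ℝ) + 2)) ∧
    ∀ pit, InvariantProb Pt pit →
      (∀ v, pit v - (if v.val = 0 then 1 / ((m : ℝ) + 1) else 1 / (2 * (m : ℝ) + 2))
          = α * (v.val.sign : ℝ) / ((m : ℝ) + 1)) ∧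
      tvDist pit
        (fun v => if v.val = 0 then 1 / ((m : ℝ) + 1) else 1 / (2 * (m : ℝ) + 2))
        = (m : ℝ) * α / ((m : ℝ) + 1) := by
  classical
  obtain ⟨hα1, hα2⟩ := hα
  have hm0 : (m : ℝ) ≠ 0 := Nat.cast_ne_zero.mpr (by omega)
  have hm1 : (m : ℝ) + 1 ≠ 0 := by positivity
  have hπeq : (fun v : {x : ℤ // x ∈ Finset.Icc (-(m : ℤ)) (m : ℤ)} =>
        if v.val = 0 then 1 / ((m : ℝ) + 1) else 1 / (2 * (m : ℝ) + 2))
      = fun v => (if v.1 = 0 then 1 else if 0 < v.1 then (1/2 : ℝ) else (1/2 : ℝ))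
          / ((m : ℝ) + 1) := by
    funext v
    split_ifs <;> field_simp <;> ring
  have hMP : ∀ u v, P u v =
      if u.1 = 0 then
        (if v.1 = 0 then 0 else (if 0 < v.1 then (1/2 : ℝ) else (1/2 : ℝ)) / m)
      else if u.1 ≠ v.1 ∧ 0 ≤ u.1 * v.1 then 1 / m else 0 := by
    intro u v
    rw [hP u v]
    split_ifs <;> first | rfl | rw [div_div] | rw [eq_comm, div_div]
  have hMPt : ∀ u v, Pt u v =
      if u.1 = 0 then
        (if v.1 = 0 then 0 else (if 0 < v.1 then (1/2 + α : ℝ) else (1/2 - α : ℝ)) / m)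
      else if u.1 ≠ v.1 ∧ 0 ≤ u.1 * v.1 then 1 / m else 0 := by
    intro u v
    rw [hPt u v]
    by_cases hu : u.1 = 0
    · rw [if_pos hu, if_pos hu]
      by_cases hv : v.1 = 0
      · rw [if_pos hv, if_pos hv]
      · rw [if_neg hv, if_neg hv]
        rcases lt_or_gt_of_ne hv with hvn | hvp
        · rw [Int.sign_eq_neg_one_iff_neg.mpr hvn, if_neg (by omega)]
          push_cast
          ring
        · rw [Int.sign_eq_one_iff_pos.mpr hvp, if_pos hvp]
          push_cast
          ring
    · rw [if_neg hu, if_neg hu, hP u v, if_neg hu]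
  refine ⟨⟨?_, ?_⟩, ?_⟩
  · -- existence for P
    rw [hπeq]
    exact Stmt14Aux.invariant_pi hm (1/2) (1/2) (by norm_num) (by norm_num) (by norm_num)
      P hMP
  · -- uniqueness for P
    intro p hp
    funext v
    rw [Stmt14Aux.invariant_val hm (1/2) (1/2) (by norm_num) P hMP p hp v]
    split_ifs <;> field_simp <;> ring
  · -- Pt part
    intro pit hpit
    have hval := Stmt14Aux.invariant_val hm (1/2 + α) (1/2 - α) (by ring) Pt hMPt pit hpit
    have hdiff : ∀ v : {x : ℤ // x ∈ Finset.Icc (-(m : ℤ)) (m : ℤ)},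
        pit v - (if v.val = 0 then 1 / ((m : ℝ) + 1) else 1 / (2 * (m : ℝ) + 2))
          = α * (v.val.sign : ℝ) / ((m : ℝ) + 1) := by
      intro v
      rw [hval v]
      rcases lt_trichotomy v.1 0 with hvn | hv0 | hvp
      · rw [if_neg (by omega), if_neg (by omega), if_neg (by omega),
          Int.sign_eq_neg_one_iff_neg.mpr hvn]
        push_cast
        field_simp
        ring
      · rw [if_pos hv0, if_pos hv0, hv0, Int.sign_zero]
        push_cast
        ring
      · rw [if_neg (by omega), if_pos hvp, if_neg (by omega),
          Int.sign_eq_one_iff_pos.mpr hvp]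
        push_cast
        field_simp
        ring
    refine ⟨hdiff, ?_⟩
    rw [tvDist]
    have habs : ∑ v : {x : ℤ // x ∈ Finset.Icc (-(m : ℤ)) (m : ℤ)},
        |pit v - (if v.val = 0 then 1 / ((m : ℝ) + 1) else 1 / (2 * (m : ℝ) + 2))|
        = ∑ v : {x : ℤ // x ∈ Finset.Icc (-(m : ℤ)) (m : ℤ)},
            |α * ((v.val.sign : ℤ) : ℝ) / ((m : ℝ) + 1)| :=
      Finset.sum_congr rfl fun v _ => by rw [hdiff v]
    rw [habs]
    have htrans : ∑ v : {x : ℤ // x ∈ Finset.Icc (-(m : ℤ)) (m : ℤ)},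
        |α * ((v.val.sign : ℤ) : ℝ) / ((m : ℝ) + 1)|
        = ∑ x ∈ Finset.Icc (-(m : ℤ)) (m : ℤ), |α * ((x.sign : ℤ) : ℝ) / ((m : ℝ) + 1)| :=
      Stmt14Aux.sum_transfer pit (fun _ x => |α * ((x.sign : ℤ) : ℝ) / ((m : ℝ) + 1)|)
    rw [htrans, Stmt14Aux.Icc_split hm]
    have h0 : |α * (((0 : ℤ).sign : ℤ) : ℝ) / ((m : ℝ) + 1)| = 0 := by
      simp
    have hposs : ∑ x ∈ Finset.Icc (1 : ℤ) (m : ℤ), |α * ((x.sign : ℤ) : ℝ) / ((m : ℝ) + 1)|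
        = (m : ℝ) * (α / ((m : ℝ) + 1)) := by
      have e : ∀ x ∈ Finset.Icc (1 : ℤ) (m : ℤ),
          |α * ((x.sign : ℤ) : ℝ) / ((m : ℝ) + 1)| = α / ((m : ℝ) + 1) := by
        intro x hx
        rw [Finset.mem_Icc] at hx
        rw [Int.sign_eq_one_iff_pos.mpr (by omega)]
        push_cast
        rw [mul_one, abs_of_pos (by positivity)]
      rw [Finset.sum_congr rfl e]
      exact Stmt14Aux.sum_const_pos _
    have hnegs : ∑ x ∈ Finset.Icc (-(m : ℤ)) (-1 : ℤ),
        |α * ((x.sign : ℤ) : ℝ) / ((m : ℝ) + 1)| = (m : ℝ) * (α / ((m : ℝ) + 1)) := by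
      have e : ∀ x ∈ Finset.Icc (-(m : ℤ)) (-1 : ℤ),
          |α * ((x.sign : ℤ) : ℝ) / ((m : ℝ) + 1)| = α / ((m : ℝ) + 1) := by
        intro x hx
        rw [Finset.mem_Icc] at hx
        rw [Int.sign_eq_neg_one_iff_neg.mpr (by omega)]
        push_cast
        rw [show α * (-1) / ((m : ℝ) + 1) = -(α / ((m : ℝ) + 1)) by ring,
          abs_neg, abs_of_pos (by positivity)]
      rw [Finset.sum_congr rfl e]
      exact Stmt14Aux.sum_const_neg _
    rw [h0, hposs, hnegs]
    field_simp
    ring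
end

section
/- For a positive integer m, let 𝒱 := {−m, …, −1, 0, 1, …, m}, let P be the stochastic matrix with P_{uv} = 1/m if u ≠ v and u·v ≥ 0 with u ≠ 0, P_{uv} = 0 if u·v < 0 or u = v ≠ 0, and P_{0v} = 1/(2m) for all v ≠ 0; for 0 < α < 1/2 let P̃ coincide with P outside row 0 with P̃_{00} = 0 and P̃_{0v} = (1/2 + α·sgn(v))/m for v ≠ 0, and let π̃ be the invariant probability vector of P̃. Then for W = {0}: the entrance time of W for P is τ*_W = m, and the exit probability from W for P̃ is γ̃_W = 1. -/
open scoped Classical BigOperators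
open Finset
open Fin.NatCast

variable {V : Type*}

/-- in the glued-complete-graphs example with `W = {0}`: the entrance
time of `W` for `P` is `m` and the exit probability from `W` for `P̃` is `1`. -/
theorem stmt15 (m : ℕ) (hm : 1 ≤ m)
    (P Pt : Matrix {x : ℤ // x ∈ Finset.Icc (-(m : ℤ)) (m : ℤ)}
      {x : ℤ // x ∈ Finset.Icc (-(m : ℤ)) (m : ℤ)} ℝ)
    (α : ℝ) (hα : 0 < α ∧ α < 1 / 2)
    (hP : ∀ u v, P u v =
      if u.val = 0 then (if v.val = 0 then 0 else 1 / (2 * (m : ℝ)))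
      else if u.val ≠ v.val ∧ 0 ≤ u.val * v.val then 1 / (m : ℝ) else 0)
    (hPt : ∀ u v, Pt u v =
      if u.val = 0 then
        (if v.val = 0 then 0 else (1 / 2 + α * (v.val.sign : ℝ)) / (m : ℝ))
      else P u v)
    (z : {x : ℤ // x ∈ Finset.Icc (-(m : ℤ)) (m : ℤ)}) (hz : z.val = 0)
    (pit : {x : ℤ // x ∈ Finset.Icc (-(m : ℤ)) (m : ℤ)} → ℝ)
    (hpit : InvariantProb Pt pit)
    (tau : {x : ℤ // x ∈ Finset.Icc (-(m : ℤ)) (m : ℤ)} → ℝ)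
    (htau0 : tau z = 0)
    (htau1 : ∀ u, u ≠ z → tau u = 1 + ∑ v, P u v * tau v) :
    entranceTime tau {z} = (m : ℝ) ∧ exitProb Pt pit {z} = 1 := by
  have hm0 : (0:ℝ) < (m:ℝ) := by exact_mod_cast hm
  have hmne : (m:ℝ) ≠ 0 := ne_of_gt hm0
  have hm1ne : (m:ℝ) + 1 ≠ 0 := by positivity
  have hzeq : ∀ v : {x : ℤ // x ∈ Finset.Icc (-(m:ℤ)) (m:ℤ)}, v.val = 0 → v = z := by
    intro v hv; exact Subtype.ext (by rw [hv, hz])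
  -- cardinalities
  have hcardPos : (univ.filter (fun u : {x : ℤ // x ∈ Finset.Icc (-(m:ℤ)) (m:ℤ)} =>
      0 < u.val)).card = m := by
    have : (univ.filter (fun u : {x : ℤ // x ∈ Finset.Icc (-(m:ℤ)) (m:ℤ)} =>
        0 < u.val)).card = (Finset.Icc (1:ℤ) (m:ℤ)).card := by
      apply Finset.card_bij (fun u _ => u.val)
      · intro a ha
        simp only [mem_filter, mem_univ, true_and] at ha
        have h2 := a.2
        simp only [Finset.mem_Icc] at h2 ⊢
        omega
      · intro a _ b _ h; exact Subtype.ext h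
      · intro b hb
        simp only [Finset.mem_Icc] at hb
        refine ⟨⟨b, ?_⟩, ?_, rfl⟩
        · simp only [Finset.mem_Icc]; omega
        · simp only [mem_filter, mem_univ, true_and]; omega
    rw [this, Int.card_Icc]; omega
  have hcardNeg : (univ.filter (fun u : {x : ℤ // x ∈ Finset.Icc (-(m:ℤ)) (m:ℤ)} =>
      u.val < 0)).card = m := by
    have : (univ.filter (fun u : {x : ℤ // x ∈ Finset.Icc (-(m:ℤ)) (m:ℤ)} =>
        u.val < 0)).card = (Finset.Icc (-(m:ℤ)) (-1:ℤ)).card := by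
      apply Finset.card_bij (fun u _ => u.val)
      · intro a ha
        simp only [mem_filter, mem_univ, true_and] at ha
        have h2 := a.2
        simp only [Finset.mem_Icc] at h2 ⊢
        omega
      · intro a _ b _ h; exact Subtype.ext h
      · intro b hb
        simp only [Finset.mem_Icc] at hb
        refine ⟨⟨b, ?_⟩, ?_, rfl⟩
        · simp only [Finset.mem_Icc]; omega
        · simp only [mem_filter, mem_univ, true_and]; omega
    rw [this, Int.card_Icc]; omega
  -- PART 1 : tau u = m for all u ≠ z
  have key : ∀ (side : ℤ → Prop) [DecidablePred side],
      (∀ x : ℤ, side x → x ≠ 0) →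
      (¬ side 0) →
      (∀ u v : ℤ, side u → (0 ≤ u * v ↔ (side v ∨ v = 0))) →
      (univ.filter (fun u : {x : ℤ // x ∈ Finset.Icc (-(m:ℤ)) (m:ℤ)} => side u.val)).card = m →
      ∀ u : {x : ℤ // x ∈ Finset.Icc (-(m:ℤ)) (m:ℤ)}, side u.val → tau u = m := by
    intro side _ hne h0 hiff hcard
    have hrow : ∀ u : {x : ℤ // x ∈ Finset.Icc (-(m:ℤ)) (m:ℤ)}, side u.val →
        tau u * ((m:ℝ) + 1) = (m:ℝ) + ∑ v ∈ univ.filter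
          (fun v : {x : ℤ // x ∈ Finset.Icc (-(m:ℤ)) (m:ℤ)} => side v.val), tau v := by
      intro u hu
      have huz : u ≠ z := by
        intro h; rw [h, hz] at hu; exact h0 hu
      have husum := htau1 u huz
      have hterm : ∀ v : {x : ℤ // x ∈ Finset.Icc (-(m:ℤ)) (m:ℤ)},
          P u v * tau v = if (side v.val ∨ v = z) ∧ v ≠ u then (1/(m:ℝ)) * tau v else 0 := by
        intro v
        rw [hP, if_neg (hne u.val hu)]
        by_cases hc : (side v.val ∨ v = z) ∧ v ≠ u
        · have h1 : u.val ≠ v.val ∧ 0 ≤ u.val * v.val := by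
            refine ⟨fun h => hc.2 (Subtype.ext h.symm), ?_⟩
            rw [hiff u.val v.val hu]
            rcases hc.1 with h | h
            · exact Or.inl h
            · exact Or.inr (by rw [h, hz])
          rw [if_pos h1, if_pos hc]
        · have h1 : ¬(u.val ≠ v.val ∧ 0 ≤ u.val * v.val) := by
            intro hcon
            apply hc
            constructor
            · have := (hiff u.val v.val hu).mp hcon.2
              rcases this with h | h
              · exact Or.inl h
              · exact Or.inr (hzeq v h)
            · intro h; exact hcon.1 (by rw [h])
          rw [if_neg h1, if_neg hc, zero_mul]
      have hsum : ∑ v, P u v * tau v = (1/(m:ℝ)) * ((∑ v ∈ univ.filter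
          (fun v : {x : ℤ // x ∈ Finset.Icc (-(m:ℤ)) (m:ℤ)} => side v.val), tau v) - tau u) := by
        calc ∑ v, P u v * tau v
            = ∑ v : {x : ℤ // x ∈ Finset.Icc (-(m:ℤ)) (m:ℤ)},
              if (side v.val ∨ v = z) ∧ v ≠ u then (1/(m:ℝ)) * tau v else 0 :=
              Finset.sum_congr rfl (fun v _ => hterm v)
          _ = ∑ v ∈ univ.filter (fun v : {x : ℤ // x ∈ Finset.Icc (-(m:ℤ)) (m:ℤ)} =>
              (side v.val ∨ v = z) ∧ v ≠ u), (1/(m:ℝ)) * tau v := (Finset.sum_filter _ _).symm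
          _ = (1/(m:ℝ)) * ∑ v ∈ univ.filter
              (fun v : {x : ℤ // x ∈ Finset.Icc (-(m:ℤ)) (m:ℤ)} =>
              (side v.val ∨ v = z) ∧ v ≠ u), tau v := by rw [Finset.mul_sum]
          _ = (1/(m:ℝ)) * ((∑ v ∈ univ.filter
              (fun v : {x : ℤ // x ∈ Finset.Icc (-(m:ℤ)) (m:ℤ)} => side v.val), tau v)
              - tau u) := by
              congr 1
              have hsplit : univ.filter (fun v : {x : ℤ // x ∈ Finset.Icc (-(m:ℤ)) (m:ℤ)} =>
                  (side v.val ∨ v = z) ∧ v ≠ u)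
                  = insert z ((univ.filter (fun v : {x : ℤ // x ∈ Finset.Icc (-(m:ℤ)) (m:ℤ)} =>
                    side v.val)).erase u) := by
                ext v
                simp only [mem_filter, mem_univ, true_and, Finset.mem_insert, Finset.mem_erase]
                constructor
                · rintro ⟨h1 | h1, h2⟩
                  · exact Or.inr ⟨h2, h1⟩
                  · exact Or.inl h1
                · rintro (h | ⟨h1, h2⟩)
                  · subst h
                    exact ⟨Or.inr rfl, fun hh => hne u.val hu (by rw [← hh, hz])⟩
                  · exact ⟨Or.inl h2, h1⟩
              rw [hsplit]
              rw [Finset.sum_insert (by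
                simp only [Finset.mem_erase, mem_filter, mem_univ, true_and]
                intro hcon
                exact h0 (by rw [← hz]; exact hz ▸ hcon.2))]
              rw [htau0, Finset.sum_erase_eq_sub (by
                simp only [mem_filter, mem_univ, true_and]; exact hu)]
              ring
      rw [hsum] at husum
      have h3 : (m:ℝ) * tau u = (m:ℝ) * (1 + 1/(m:ℝ) * ((∑ v ∈ univ.filter
          (fun v : {x : ℤ // x ∈ Finset.Icc (-(m:ℤ)) (m:ℤ)} => side v.val), tau v)
          - tau u)) := by rw [← husum]
      rw [mul_add, mul_one, ← mul_assoc, mul_one_div_cancel hmne, one_mul] at h3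
      linarith
    have hSsum : (∑ u ∈ univ.filter
        (fun u : {x : ℤ // x ∈ Finset.Icc (-(m:ℤ)) (m:ℤ)} => side u.val), tau u) * ((m:ℝ) + 1)
        = (m:ℝ) * ((m:ℝ) + ∑ u ∈ univ.filter
          (fun u : {x : ℤ // x ∈ Finset.Icc (-(m:ℤ)) (m:ℤ)} => side u.val), tau u) := by
      rw [Finset.sum_mul]
      rw [Finset.sum_congr rfl (fun u hu => hrow u (by
        simpa only [mem_filter, mem_univ, true_and] using hu))]
      rw [Finset.sum_const, hcard, nsmul_eq_mul]
    have hSval : (∑ u ∈ univ.filter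
        (fun u : {x : ℤ // x ∈ Finset.Icc (-(m:ℤ)) (m:ℤ)} => side u.val), tau u)
        = (m:ℝ) * m := by linarith
    intro u hu
    have h1 := hrow u hu
    rw [hSval] at h1
    have h2 : tau u * ((m:ℝ) + 1) = (m:ℝ) * ((m:ℝ) + 1) := by linarith [h1]; 
    exact mul_right_cancel₀ hm1ne h2
  have htaum : ∀ u, u ≠ z → tau u = m := by
    intro u hu
    have huv : u.val ≠ 0 := fun h => hu (hzeq u h)
    rcases lt_or_gt_of_ne huv with h | h
    · refine key (fun x => x < 0) (fun x hx => by omega) (by omega) ?_ hcardNeg u h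
      intro a b ha
      constructor
      · intro hab
        rcases lt_trichotomy b 0 with h' | h' | h'
        · exact Or.inl h'
        · exact Or.inr h'
        · exfalso; nlinarith
      · rintro (h' | h')
        · exact (mul_pos_of_neg_of_neg ha h').le
        · rw [h', mul_zero]
    · refine key (fun x => 0 < x) (fun x hx => by omega) (by omega) ?_ hcardPos u h
      intro a b ha
      constructor
      · intro hab
        rcases lt_trichotomy b 0 with h' | h' | h'
        · exfalso; nlinarith
        · exact Or.inr h'
        · exact Or.inl h'
      · rintro (h' | h')
        · exact mul_nonneg ha.le h'.le
        · rw [h', mul_zero]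
  constructor
  · -- entrance time
    have hone : (1:ℤ) ∈ Finset.Icc (-(m:ℤ)) (m:ℤ) := by
      simp only [Finset.mem_Icc]; omega
    have honez : (⟨1, hone⟩ : {x : ℤ // x ∈ Finset.Icc (-(m:ℤ)) (m:ℤ)}) ≠ z := by
      intro h
      have : (1:ℤ) = 0 := by rw [← hz, ← h]
      exact one_ne_zero this
    have hset : {x : ℝ | ∃ u, u ∉ ({z} : Finset {x : ℤ // x ∈ Finset.Icc (-(m:ℤ)) (m:ℤ)}) ∧
        x = tau u} = {(m:ℝ)} := by
      ext x
      simp only [Set.mem_setOf_eq, Set.mem_singleton_iff, Finset.mem_singleton]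
      constructor
      · rintro ⟨u, hu, rfl⟩
        exact htaum u hu
      · rintro rfl
        exact ⟨⟨1, hone⟩, honez, (htaum _ honez).symm⟩
    rw [entranceTime, hset, csInf_singleton]
  · -- exit probability
    have hPtzz : Pt z z = 0 := by rw [hPt]; simp [hz]
    have hPtz : ∀ v : {x : ℤ // x ∈ Finset.Icc (-(m:ℤ)) (m:ℤ)}, v ≠ z →
        Pt z v = (1 / 2 + α * ((v.val.sign : ℤ) : ℝ)) / (m:ℝ) := by
      intro v hv
      rw [hPt, if_pos hz, if_neg (fun h => hv (hzeq v h))]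
    have phi1 : phi Pt ({z} : Finset {x : ℤ // x ∈ Finset.Icc (-(m:ℤ)) (m:ℤ)}) z 1 = 1 := by
      have hb : phi Pt ({z} : Finset {x : ℤ // x ∈ Finset.Icc (-(m:ℤ)) (m:ℤ)}) z 1
          = ∑ v ∈ univ.filter
            (fun v : {x : ℤ // x ∈ Finset.Icc (-(m:ℤ)) (m:ℤ)} => v ≠ z), Pt z v := by
        rw [phi]
        refine Finset.sum_nbij' (fun ξ => ξ 1) (fun v => fun i => if i = 0 then z else v)
          ?_ ?_ ?_ ?_ ?_
        · intro ξ hξ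
          simp only [mem_filter, mem_univ, true_and] at hξ
          simp only [mem_filter, mem_univ, true_and]
          have := hξ.2.2
          simpa using this
        · intro v hv
          simp only [mem_filter, mem_univ, true_and] at hv
          simp only [mem_filter, mem_univ, true_and]
          refine ⟨rfl, fun l hl1 hl2 => by omega, ?_⟩
          simpa using hv
        · intro ξ hξ
          simp only [mem_filter, mem_univ, true_and] at hξ
          funext i
          fin_cases i
          · simpa using hξ.1.symm
          · simp
        · intro v _
          simp
        · intro ξ hξ
          simp only [mem_filter, mem_univ, true_and] at hξ
          rw [Finset.prod_range_one]
          simp only [Nat.cast_zero, zero_add]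
          rw [hξ.1]
      rw [hb]
      have hsplit : univ.filter (fun v : {x : ℤ // x ∈ Finset.Icc (-(m:ℤ)) (m:ℤ)} => v ≠ z)
          = univ.filter (fun v : {x : ℤ // x ∈ Finset.Icc (-(m:ℤ)) (m:ℤ)} => 0 < v.val)
          ∪ univ.filter (fun v : {x : ℤ // x ∈ Finset.Icc (-(m:ℤ)) (m:ℤ)} => v.val < 0) := by
        ext v
        simp only [mem_filter, mem_univ, true_and, Finset.mem_union]
        constructor
        · intro h
          have : v.val ≠ 0 := fun hh => h (hzeq v hh)
          omega
        · intro h hh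
          rw [hh, hz] at h
          omega
      have hdisj : Disjoint
          (univ.filter (fun v : {x : ℤ // x ∈ Finset.Icc (-(m:ℤ)) (m:ℤ)} => 0 < v.val))
          (univ.filter (fun v : {x : ℤ // x ∈ Finset.Icc (-(m:ℤ)) (m:ℤ)} => v.val < 0)) := by
        rw [Finset.disjoint_left]
        intro a ha hb
        simp only [mem_filter, mem_univ, true_and] at ha hb
        omega
      rw [hsplit, Finset.sum_union hdisj]
      have hpos : ∑ v ∈ univ.filter
          (fun v : {x : ℤ // x ∈ Finset.Icc (-(m:ℤ)) (m:ℤ)} => 0 < v.val), Pt z v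
          = m * ((1 / 2 + α) / (m:ℝ)) := by
        rw [Finset.sum_congr rfl (fun v hv => ?_), Finset.sum_const, hcardPos, nsmul_eq_mul]
        simp only [mem_filter, mem_univ, true_and] at hv
        rw [hPtz v (fun h => by rw [h, hz] at hv; omega)]
        rw [Int.sign_eq_one_iff_pos.mpr hv]
        norm_num
      have hneg : ∑ v ∈ univ.filter
          (fun v : {x : ℤ // x ∈ Finset.Icc (-(m:ℤ)) (m:ℤ)} => v.val < 0), Pt z v
          = m * ((1 / 2 - α) / (m:ℝ)) := by
        rw [Finset.sum_congr rfl (fun v hv => ?_), Finset.sum_const, hcardNeg, nsmul_eq_mul]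
        simp only [mem_filter, mem_univ, true_and] at hv
        rw [hPtz v (fun h => by rw [h, hz] at hv; omega)]
        rw [Int.sign_eq_neg_one_iff_neg.mpr hv]
        push_cast
        ring
      rw [hpos, hneg]
      field_simp
      ring
    have phik0 : ∀ k : ℕ, 2 ≤ k →
        phi Pt ({z} : Finset {x : ℤ // x ∈ Finset.Icc (-(m:ℤ)) (m:ℤ)}) z k = 0 := by
      intro k hk
      rw [phi]
      apply Finset.sum_eq_zero
      intro ξ hξ
      simp only [mem_filter, mem_univ, true_and] at hξ
      obtain ⟨h0, hmid, _⟩ := hξ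
      apply Finset.prod_eq_zero (Finset.mem_range.mpr (by omega : 0 < k))
      have h1mem : ξ ((1:ℕ) : Fin (k+1)) ∈ ({z} : Finset _) := hmid 1 one_pos (by omega)
      have h1z : ξ ((1:ℕ) : Fin (k+1)) = z := Finset.mem_singleton.mp h1mem
      simp only [Nat.cast_zero, Nat.cast_one, zero_add] at h1z ⊢
      rw [h0, h1z]
      exact hPtzz
    have hsumphi : ∀ t : ℕ, 1 ≤ t →
        ∑ k ∈ Finset.Icc 1 t, phi Pt ({z} : Finset _) z k = 1 := by
      intro t ht
      rw [Finset.sum_eq_single_of_mem 1 (Finset.mem_Icc.mpr ⟨le_refl 1, ht⟩)]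
      · exact phi1
      · intro k hk hne
        exact phik0 k (by rw [Finset.mem_Icc] at hk; omega)
    have hAux : ∀ t : ℕ, 1 ≤ t →
        exitProbAux Pt pit ({z} : Finset _) t = 1 ∨
        exitProbAux Pt pit ({z} : Finset _) t = 1/(t:ℝ) := by
      intro t ht
      rw [exitProbAux]
      split_ifs with h
      · right
        have hfz : 0 < pit z := by
          by_contra hp
          rw [Finset.filter_singleton, if_neg hp] at h
          exact Finset.not_nonempty_empty h
        have hz_mem : z ∈ (({z} : Finset _).filter fun w => 0 < pit w) := by
          rw [Finset.filter_singleton, if_pos hfz]; exact Finset.mem_singleton_self z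
        have heq : (({z} : Finset _).filter fun w => 0 < pit w).inf' h
            (fun w => (1/(t:ℝ)) * ∑ k ∈ Finset.Icc 1 t, phi Pt ({z} : Finset _) w k)
            = (1/(t:ℝ)) * ∑ k ∈ Finset.Icc 1 t, phi Pt ({z} : Finset _) z k := by
          apply le_antisymm
          · exact Finset.inf'_le _ hz_mem
          · apply Finset.le_inf'
            intro w hw
            have hwz : w = z := by
              have := Finset.mem_filter.mp hw
              exact Finset.mem_singleton.mp this.1
            rw [hwz]
        rw [heq, hsumphi t ht, mul_one]
      · left; rfl
    have hA1 : exitProbAux Pt pit ({z} : Finset _) 1 = 1 := by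
      rcases hAux 1 le_rfl with h | h
      · exact h
      · rw [h]; norm_num
    have hle : ∀ x ∈ {x : ℝ | ∃ t : ℕ, 1 ≤ t ∧ x = exitProbAux Pt pit ({z} : Finset _) t},
        x ≤ 1 := by
      rintro x ⟨t, ht, rfl⟩
      rcases hAux t ht with h | h
      · rw [h]
      · rw [h]
        rw [div_le_one (by exact_mod_cast Nat.pos_of_ne_zero (by omega))]
        exact_mod_cast ht
    have hmem : (1:ℝ) ∈ {x : ℝ | ∃ t : ℕ, 1 ≤ t ∧
        x = exitProbAux Pt pit ({z} : Finset _) t} := ⟨1, le_rfl, hA1.symm⟩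
    rw [exitProb]
    apply le_antisymm
    · exact csSup_le ⟨1, hmem⟩ hle
    · exact le_csSup ⟨1, fun x hx => hle x hx⟩ hmem
end
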